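/- For all integers n ≥ 1 and r ≥ 0, the multiset B_{n+1,r} equals the disjoint multiset union of (B_{n,r} + 1) (i.e., every element of B_{n,r} shifted up by 1), the multiset {−m − r : 0 ≤ m ≤ n} ∪ {−m − r − 1 : 0 ≤ m ≤ n}, and the multiset {−l : 0 ≤ l ≤ r}; equivalently, B_{n+1,r} is the disjoint union of (B_{n,r} + 1) with the multiset containing each of 0, −1, …, −r + 1 once, each of −r, −r−1, …, −n−r twice, and −n−r−1 once. -/

import Mathlib

/-- The multiset `B_{n,r} = {m − l : 0 ≤ m ≤ n, 0 ≤ l ≤ 2m + r}`. -/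
def multisetB (n r : ℕ) : Multiset ℤ :=
  (Multiset.range (n + 1)).bind fun m =>
    (Multiset.range (2 * m + r + 1)).map fun l => (m : ℤ) - (l : ℤ)

lemma coeM_eq (s : Multiset ℕ) : (↑s : Multiset ℤ) = s.map (fun (a : ℕ) => (a : ℤ)) := by
  change s.bind _ = _
  simp only [Multiset.pure_def, Multiset.bind_singleton]

lemma multisetB_eq (n r : ℕ) : multisetB n r =
    (Multiset.range (n + 1)).bind fun m =>
      (Multiset.range (2 * m + r + 1)).map fun l : ℕ => (m : ℤ) - (l : ℤ) := by
  unfold multisetB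
  refine Multiset.bind_congr fun m _ => ?_
  rw [coeM_eq, Multiset.map_map]
  rfl

lemma mrange_succ' (n : ℕ) :
    Multiset.range (n + 1) = 0 ::ₘ (Multiset.range n).map (· + 1) := by
  have := List.range_succ_eq_map (n := n)
  simpa [Multiset.range, Multiset.map_coe] using
    congrArg (fun l : List ℕ => (l : Multiset ℕ)) this

lemma B_succ (n r : ℕ) :
    multisetB (n + 1) r =
      ((Multiset.range (r + 1)).map fun l : ℕ => -(l : ℤ))
      + (multisetB n r).map (· + 1)
      + ((Multiset.range (n + 1)).map fun m : ℕ => -(m : ℤ) - (r : ℤ))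
      + ((Multiset.range (n + 1)).map fun m : ℕ => -(m : ℤ) - (r : ℤ) - 1) := by
  have h1 : multisetB (n + 1) r =
      ((Multiset.range (r + 1)).map fun l : ℕ => -(l : ℤ))
      + (Multiset.range (n + 1)).bind (fun m =>
          (Multiset.range (2 * (m + 1) + r + 1)).map fun l : ℕ => ((m : ℤ) + 1) - (l : ℤ)) := by
    rw [multisetB_eq, mrange_succ' (n + 1), Multiset.cons_bind, Multiset.bind_map]
    congr 1
    refine Multiset.map_congr (by ring_nf) fun l _ => by push_cast; ring
  have h2 : ∀ m : ℕ, (Multiset.range (2 * (m + 1) + r + 1)).map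
        (fun l : ℕ => ((m : ℤ) + 1) - (l : ℤ)) =
      (-(m : ℤ) - (r : ℤ) - 1) ::ₘ (-(m : ℤ) - (r : ℤ)) ::ₘ
        ((Multiset.range (2 * m + r + 1)).map fun l : ℕ => ((m : ℤ) + 1) - (l : ℤ)) := by
    intro m
    have : 2 * (m + 1) + r + 1 = (2 * m + r + 1) + 1 + 1 := by ring
    rw [this, Multiset.range_succ, Multiset.range_succ, Multiset.map_cons, Multiset.map_cons]
    congr 1
    · push_cast; ring
    · congr 1; push_cast; ring
  have h3 : (multisetB n r).map (· + 1) =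
      (Multiset.range (n + 1)).bind (fun m =>
        (Multiset.range (2 * m + r + 1)).map fun l : ℕ => ((m : ℤ) + 1) - (l : ℤ)) := by
    rw [multisetB_eq, Multiset.map_bind]
    refine Multiset.bind_congr fun m _ => ?_
    rw [Multiset.map_map]
    refine Multiset.map_congr rfl fun l _ => ?_
    simp only [Function.comp_apply]
    ring
  rw [h1, h3, Multiset.bind_congr (fun m _ => h2 m)]
  simp only [Multiset.bind_cons]
  abel

/-- For `n ≥ 1`, `r ≥ 0`: `B_{n+1,r}` is the disjoint multiset union of `B_{n,r} + 1`,
`{−m − r : 0 ≤ m ≤ n} ∪ {−m − r − 1 : 0 ≤ m ≤ n}` and `{−l : 0 ≤ l ≤ r}`; equivalently,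
it is the disjoint union of `B_{n,r} + 1` with the multiset containing each of
`0, −1, …, −r + 1` once, each of `−r, −r−1, …, −n−r` twice, and `−n−r−1` once. -/
theorem siegel_multiset_B_inductive_step (n r : ℕ) (hn : 1 ≤ n) :
    (multisetB (n + 1) r = (multisetB n r).map (· + 1)
        + (((Multiset.range (n + 1)).map fun m => -(m : ℤ) - (r : ℤ))
            + ((Multiset.range (n + 1)).map fun m => -(m : ℤ) - (r : ℤ) - 1))
        + ((Multiset.range (r + 1)).map fun l => -(l : ℤ)))
    ∧ (multisetB (n + 1) r = (multisetB n r).map (· + 1)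
        + ((Multiset.range r).map fun l => -(l : ℤ))
        + ((Multiset.range (n + 1)).map fun m => -(m : ℤ) - (r : ℤ))
        + ((Multiset.range (n + 1)).map fun m => -(m : ℤ) - (r : ℤ))
        + ({-(n : ℤ) - (r : ℤ) - 1} : Multiset ℤ)) := by
  simp only [coeM_eq, Multiset.map_map, Function.comp_def]
  constructor
  · rw [B_succ]; abel
  · rw [B_succ]
    have hr : ((Multiset.range (r + 1)).map fun l : ℕ => -(l : ℤ)) =
        (-(r : ℤ)) ::ₘ ((Multiset.range r).map fun l : ℕ => -(l : ℤ)) := by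
      rw [Multiset.range_succ, Multiset.map_cons]
    have hm : ((Multiset.range (n + 1)).map fun m : ℕ => -(m : ℤ) - (r : ℤ) - 1) =
        (-(n : ℤ) - (r : ℤ) - 1) ::ₘ
          ((Multiset.range n).map fun m : ℕ => -(m : ℤ) - (r : ℤ) - 1) := by
      rw [Multiset.range_succ, Multiset.map_cons]
    have hkey : (-(r : ℤ)) ::ₘ ((Multiset.range n).map fun m : ℕ => -(m : ℤ) - (r : ℤ) - 1) =
        (Multiset.range (n + 1)).map fun m : ℕ => -(m : ℤ) - (r : ℤ) := by
      rw [mrange_succ' n, Multiset.map_cons, Multiset.map_map]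
      congr 1
      · simp
      · refine Multiset.map_congr rfl fun m _ => ?_
        simp only [Function.comp_apply]
        push_cast; ring
    rw [hr, hm, ← hkey]
    simp only [← Multiset.singleton_add, ← Multiset.cons_coe, Multiset.singleton_eq_cons_iff]
    abel
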